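/- For any real symmetric matrix Y with tr(Y) = n and kY − J_n positive semidefinite, where L is a graph Laplacian with largest eigenvalue λ_max, one has (1/2)tr(LY) ≤ (n(k−1)/(2k))·λ_max; moreover this bound is attained by some such Y, so the optimal value of the SDP max{(1/2)tr(LY) : tr(Y) = n, kY − J_n ⪰ 0} equals (n(k−1)/(2k))·λ_max. -/

import Mathlib

def cutSize {n k : ℕ} (G : SimpleGraph (Fin n)) [DecidableRel G.Adj] (f : Fin n → Fin k) : ℕ :=
  (G.edgeFinset.filter (fun e => ¬ (Sym2.map f e).IsDiag)).card

def hasEigenvalue {n : ℕ} (M : Matrix (Fin n) (Fin n) ℝ) (μ : ℝ) : Prop :=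
  ∃ v : Fin n → ℝ, v ≠ 0 ∧ M.mulVec v = μ • v

def isLargestEigenvalue {n : ℕ} (M : Matrix (Fin n) (Fin n) ℝ) (lam : ℝ) : Prop :=
  hasEigenvalue M lam ∧ ∀ μ : ℝ, hasEigenvalue M μ → μ ≤ lam

open Matrix in
lemma aux_trace_nonneg {n : ℕ} {A : Matrix (Fin n) (Fin n) ℝ} (hA : A.PosSemidef) :
    0 ≤ A.trace := by
  rw [Matrix.trace]
  apply Finset.sum_nonneg
  intro i _
  have := hA.dotProduct_mulVec_nonneg (Pi.single i 1)
  simpa [Matrix.mulVec_single, dotProduct, Pi.single_apply] using this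

open Matrix in
lemma aux_trace_mul_nonneg {n : ℕ} {A B : Matrix (Fin n) (Fin n) ℝ}
    (hA : A.PosSemidef) (hB : B.PosSemidef) : 0 ≤ (A * B).trace := by
  obtain ⟨C, rfl⟩ : ∃ C : Matrix (Fin n) (Fin n) ℝ, B = Cᴴ * C := by
    open scoped MatrixOrder in
    exact ⟨CFC.sqrt B, by
      rw [(CFC.sqrt_nonneg B).posSemidef.1.eq, CFC.sqrt_mul_sqrt_self B hB.nonneg]⟩
  rw [← Matrix.mul_assoc, Matrix.trace_mul_cycle]
  exact aux_trace_nonneg (hA.mul_mul_conjTranspose_same C)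

open Matrix in
lemma aux_smul_one_sub_psd {n : ℕ} {L : Matrix (Fin n) (Fin n) ℝ} (hL : L.IsHermitian)
    (lam : ℝ) (hlam : ∀ i, hL.eigenvalues i ≤ lam) :
    (lam • (1 : Matrix (Fin n) (Fin n) ℝ) - L).PosSemidef := by
  have hU : (hL.eigenvectorUnitary : Matrix (Fin n) (Fin n) ℝ) *
      star (hL.eigenvectorUnitary : Matrix (Fin n) (Fin n) ℝ) = 1 :=
    (Matrix.mem_unitaryGroup_iff).mp hL.eigenvectorUnitary.2
  have key : lam • (1 : Matrix (Fin n) (Fin n) ℝ) - L =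
      (hL.eigenvectorUnitary : Matrix (Fin n) (Fin n) ℝ) *
        Matrix.diagonal (fun i => lam - hL.eigenvalues i) *
        star (hL.eigenvectorUnitary : Matrix (Fin n) (Fin n) ℝ) := by
    have hd : Matrix.diagonal (fun i => lam - hL.eigenvalues i) =
        lam • (1 : Matrix (Fin n) (Fin n) ℝ)
          - Matrix.diagonal (RCLike.ofReal ∘ hL.eigenvalues) := by
      ext i j
      by_cases h : i = j <;> simp [Matrix.diagonal, h]
    rw [hd, Matrix.mul_sub, Matrix.sub_mul]
    rw [Matrix.mul_smul, Matrix.mul_one, Matrix.smul_mul, hU]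
    rw [← Unitary.conjStarAlgAut_apply (S := ℝ), ← hL.spectral_theorem]
  rw [key]
  exact (Matrix.posSemidef_diagonal_iff.mpr
    (fun i => sub_nonneg.mpr (hlam i))).mul_mul_conjTranspose_same _

theorem stmt_19 {n k : ℕ} (hk2 : 2 ≤ k) (hkn : k ≤ n)
    (L : Matrix (Fin n) (Fin n) ℝ) (hL : L.PosSemidef)
    (hL1 : L.mulVec (fun _ => 1) = 0)
    (lam : ℝ) (hlam : isLargestEigenvalue L lam) :
    (∀ Y : Matrix (Fin n) (Fin n) ℝ, Y.IsSymm → Y.trace = n →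
        ((k : ℝ) • Y - Matrix.of (fun _ _ => (1 : ℝ))).PosSemidef →
        (1 / 2) * (L * Y).trace ≤ (n : ℝ) * ((k : ℝ) - 1) / (2 * k) * lam) ∧
    (∃ Y : Matrix (Fin n) (Fin n) ℝ, Y.IsSymm ∧ Y.trace = n ∧
        ((k : ℝ) • Y - Matrix.of (fun _ _ => (1 : ℝ))).PosSemidef ∧
        (1 / 2) * (L * Y).trace = (n : ℝ) * ((k : ℝ) - 1) / (2 * k) * lam) := by
  have hk0 : (0 : ℝ) < (k : ℝ) := by exact_mod_cast Nat.lt_of_lt_of_le (by norm_num) hk2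
  set J : Matrix (Fin n) (Fin n) ℝ := Matrix.of (fun _ _ => (1 : ℝ)) with hJ
  -- row sums of L vanish
  have hrow : ∀ i, ∑ m, L i m = 0 := by
    intro i
    have := congrFun hL1 i
    simpa [Matrix.mulVec, dotProduct] using this
  have htrLJ : (L * J).trace = 0 := by
    rw [Matrix.trace]
    apply Finset.sum_eq_zero
    intro i _
    simp [Matrix.mul_apply, hJ]
    exact hrow i
  have htrJ : J.trace = n := by
    simp [Matrix.trace, hJ]
  constructor
  · intro Y hY htrY hpsd
    have hLH : L.IsHermitian := hL.1
    have hev : ∀ i, hLH.eigenvalues i ≤ lam := by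
      intro i
      refine hlam.2 _ ⟨(hLH.eigenvectorBasis i : EuclideanSpace ℝ (Fin n)), ?_, hLH.mulVec_eigenvectorBasis i⟩
      intro h
      exact hLH.eigenvectorBasis.orthonormal.ne_zero i (by ext j; exact congrFun h j)
    have hkey := aux_smul_one_sub_psd hLH lam hev
    have h2 : 0 ≤ ((lam • (1 : Matrix (Fin n) (Fin n) ℝ) - L) * ((k : ℝ) • Y - J)).trace :=
      aux_trace_mul_nonneg hkey hpsd
    have hexp : ((lam • (1 : Matrix (Fin n) (Fin n) ℝ) - L) * ((k : ℝ) • Y - J)).trace =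
        lam * ((k : ℝ) * Y.trace - J.trace) - ((k : ℝ) * (L * Y).trace - (L * J).trace) := by
      simp [Matrix.sub_mul, Matrix.mul_sub, Matrix.smul_mul, Matrix.mul_smul,
        Matrix.trace_sub, Matrix.trace_smul, smul_eq_mul]
      ring
    rw [hexp, htrY, htrJ, htrLJ] at h2
    rw [div_mul_eq_mul_div ((n:ℝ)*((k:ℝ)-1)) (2*(k:ℝ)) lam, le_div_iff₀ (by positivity)]
    nlinarith [h2]
  · obtain ⟨v, hv0, hvL⟩ := hlam.1
    set s : ℝ := dotProduct v v with hs_def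
    have hs0 : 0 < s := by
      have h1 : s ≠ 0 := fun h => hv0 (dotProduct_self_eq_zero.mp h)
      have h2 : 0 ≤ s := Finset.sum_nonneg fun i _ => mul_self_nonneg _
      exact lt_of_le_of_ne h2 (Ne.symm h1)
    set c : ℝ := ((n : ℝ) * ((k : ℝ) - 1)) / ((k : ℝ) * s) with hc_def
    have hk1 : (1:ℝ) ≤ (k:ℝ) := by exact_mod_cast Nat.one_le_of_lt hk2
    have hc0 : 0 ≤ c := by
      apply div_nonneg
      · exact mul_nonneg (Nat.cast_nonneg n) (by linarith)
      · positivity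
    refine ⟨((1 : ℝ) / k) • J + c • Matrix.vecMulVec v v, ?_, ?_, ?_, ?_⟩
    · show _ = _
      ext i j
      simp [Matrix.transpose_apply, Matrix.vecMulVec_apply, hJ, mul_comm]
    · have htrV : (Matrix.vecMulVec v v).trace = s := by
        simp [Matrix.trace, Matrix.diag, Matrix.vecMulVec_apply, hs_def, dotProduct]
      rw [Matrix.trace_add, Matrix.trace_smul, Matrix.trace_smul, htrJ, htrV,
        smul_eq_mul, smul_eq_mul, hc_def]
      field_simp
      ring
    · have heq : (k : ℝ) • (((1 : ℝ) / k) • J + c • Matrix.vecMulVec v v) - J =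
          ((k : ℝ) * c) • Matrix.vecMulVec v v := by
        rw [smul_add, smul_smul, smul_smul, mul_one_div, div_self hk0.ne', one_smul]
        abel
      rw [heq]
      have hVpsd : (Matrix.vecMulVec v v).PosSemidef := by
        refine Matrix.PosSemidef.of_dotProduct_mulVec_nonneg ?_ ?_
        · ext i j
          simp [Matrix.vecMulVec_apply, mul_comm]
        · intro x
          have hmv : (Matrix.vecMulVec v v).mulVec x = (dotProduct v x) • v := by
            ext i
            simp [Matrix.mulVec, dotProduct, Matrix.vecMulVec_apply, Finset.mul_sum,
              mul_assoc, mul_comm, mul_left_comm]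
          rw [hmv]
          have : dotProduct (star x) ((dotProduct v x) • v) =
              (dotProduct v x) * (dotProduct v x) := by
            simp [dotProduct, Finset.mul_sum]
            apply Finset.sum_congr rfl
            intro i _
            ring
          rw [this]
          exact mul_self_nonneg _
      refine Matrix.PosSemidef.of_dotProduct_mulVec_nonneg ?_ ?_
      · show (((k : ℝ) * c) • Matrix.vecMulVec v v).conjTranspose =
            ((k : ℝ) * c) • Matrix.vecMulVec v v
        ext i j
        simp only [Matrix.conjTranspose_apply, Matrix.smul_apply, Matrix.vecMulVec_apply,
          smul_eq_mul, star_trivial]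
        ring
      · intro x
        have := hVpsd.dotProduct_mulVec_nonneg x
        rw [Matrix.smul_mulVec, dotProduct_smul, smul_eq_mul]
        exact mul_nonneg (mul_nonneg hk0.le hc0) this
    · have hLV : L * Matrix.vecMulVec v v = lam • Matrix.vecMulVec v v := by
        ext i j
        have : (L * Matrix.vecMulVec v v) i j = (L.mulVec v) i * v j := by
          simp [Matrix.mul_apply, Matrix.vecMulVec_apply, Matrix.mulVec, dotProduct,
            Finset.sum_mul, mul_assoc]
        rw [this, hvL]
        simp [Matrix.vecMulVec_apply, mul_assoc]
      have htrV : (Matrix.vecMulVec v v).trace = s := by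
        simp [Matrix.trace, Matrix.diag, Matrix.vecMulVec_apply, hs_def, dotProduct]
      rw [Matrix.mul_add, Matrix.mul_smul, Matrix.mul_smul, Matrix.trace_add,
        Matrix.trace_smul, Matrix.trace_smul, htrLJ, hLV, Matrix.trace_smul, htrV,
        smul_eq_mul, smul_eq_mul, smul_eq_mul, hc_def]
      field_simp
      ring
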